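/- A bi-infinite sequence (u_m)_{m ∈ ℤ} over a finite alphabet is (−p)-automatic if and only if both one-sided sequences (u_m)_{m ≥ 0} and (u_{−m})_{m ≥ 0} are p-automatic. -/

import Mathlib

/-- `u : ℕ → A` is `p`-automatic: some DFAO, reading the standard base-`p` representation
of `n` (digits `< p`, least significant digit first, no leading zero) outputs `u n`. -/
def IsPAutomatic {A : Type*} (p : ℕ) (u : ℕ → A) : Prop :=
  ∃ (S : Type) (_ : Fintype S) (δ : S → ℕ → S) (s0 : S) (ω : S → A),
    ∀ (n : ℕ) (L : List ℕ), (∀ d ∈ L, d < p) → (∀ h : L ≠ [], L.getLast h ≠ 0) →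
      (n : ℤ) = ∑ i ∈ Finset.range L.length, (L.getD i 0 : ℤ) * (p : ℤ) ^ i →
      ω (L.foldl δ s0) = u n

/-- `u : ℤ → A` is `(-p)`-automatic: some DFAO, reading the standard base-`(-p)`
representation of `m` (digits `< p`, least significant digit first, no leading zero)
outputs `u m`. -/
def IsNegPAutomatic {A : Type*} (p : ℕ) (u : ℤ → A) : Prop :=
  ∃ (S : Type) (_ : Fintype S) (δ : S → ℕ → S) (s0 : S) (ω : S → A),
    ∀ (m : ℤ) (L : List ℕ), (∀ d ∈ L, d < p) → (∀ h : L ≠ [], L.getLast h ≠ 0) →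
      m = ∑ i ∈ Finset.range L.length, (L.getD i 0 : ℤ) * (-(p : ℤ)) ^ i →
      ω (L.foldl δ s0) = u m

namespace NegPAux

variable {A : Type*}

/-- Transport a DFAO on an arbitrary finite type to `Fin n`, for `IsPAutomatic`. -/
lemma isPAutomatic_intro (p : ℕ) (v : ℕ → A) {S' : Type*} [Fintype S']
    (δ : S' → ℕ → S') (s0 : S') (ω : S' → A)
    (h : ∀ (n : ℕ) (L : List ℕ), (∀ d ∈ L, d < p) → (∀ h : L ≠ [], L.getLast h ≠ 0) →
      (n : ℤ) = ∑ i ∈ Finset.range L.length, (L.getD i 0 : ℤ) * (p : ℤ) ^ i →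
      ω (L.foldl δ s0) = v n) : IsPAutomatic p v := by
  classical
  set e := Fintype.equivFin S' with he
  refine ⟨Fin (Fintype.card S'), inferInstance,
    fun s d => e (δ (e.symm s) d), e s0, fun s => ω (e.symm s), ?_⟩
  have key : ∀ (L : List ℕ) (s : S'),
      L.foldl (fun s d => e (δ (e.symm s) d)) (e s) = e (L.foldl δ s) := by
    intro L
    induction L with
    | nil => intro s; rfl
    | cons d L ih =>
        intro s
        simp only [List.foldl_cons, Equiv.symm_apply_apply]
        exact ih (δ s d)
  intro n L h1 h2 h3
  simp only [key L s0, Equiv.symm_apply_apply]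
  exact h n L h1 h2 h3

/-- Transport a DFAO on an arbitrary finite type to `Fin n`, for `IsNegPAutomatic`. -/
lemma isNegPAutomatic_intro (p : ℕ) (u : ℤ → A) {S' : Type*} [Fintype S']
    (δ : S' → ℕ → S') (s0 : S') (ω : S' → A)
    (h : ∀ (m : ℤ) (L : List ℕ), (∀ d ∈ L, d < p) → (∀ h : L ≠ [], L.getLast h ≠ 0) →
      m = ∑ i ∈ Finset.range L.length, (L.getD i 0 : ℤ) * (-(p : ℤ)) ^ i →
      ω (L.foldl δ s0) = u m) : IsNegPAutomatic p u := by
  classical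
  set e := Fintype.equivFin S' with he
  refine ⟨Fin (Fintype.card S'), inferInstance,
    fun s d => e (δ (e.symm s) d), e s0, fun s => ω (e.symm s), ?_⟩
  have key : ∀ (L : List ℕ) (s : S'),
      L.foldl (fun s d => e (δ (e.symm s) d)) (e s) = e (L.foldl δ s) := by
    intro L
    induction L with
    | nil => intro s; rfl
    | cons d L ih =>
        intro s
        simp only [List.foldl_cons, Equiv.symm_apply_apply]
        exact ih (δ s d)
  intro m L h1 h2 h3
  simp only [key L s0, Equiv.symm_apply_apply]
  exact h m L h1 h2 h3

/-- The `p`-kernel of a one-sided sequence. -/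
def PKer (p : ℕ) (v : ℕ → A) : Set (ℕ → A) :=
  {g | ∃ L : List ℕ, (∀ d ∈ L, d < p) ∧
    g = fun n => v (Nat.ofDigits p L + p ^ L.length * n)}

/-- The `(-p)`-kernel of a two-sided sequence. -/
def NKer (p : ℕ) (u : ℤ → A) : Set (ℤ → A) :=
  {h | ∃ L : List ℕ, (∀ d ∈ L, d < p) ∧
    h = fun m => u (Nat.ofDigits (-(p : ℤ)) L + (-(p : ℤ)) ^ L.length * m)}




lemma ofDigits_cons' (b : ℤ) (d : ℕ) (L : List ℕ) :
    Nat.ofDigits b (d :: L) = (d : ℤ) + b * Nat.ofDigits b L := rfl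

lemma ofDigits_append' (b : ℤ) (L₁ L₂ : List ℕ) :
    Nat.ofDigits b (L₁ ++ L₂) = Nat.ofDigits b L₁ + b ^ L₁.length * Nat.ofDigits b L₂ := by
  induction L₁ with
  | nil => simp [Nat.ofDigits]
  | cons d L ih =>
      simp only [List.cons_append, ofDigits_cons', ih, List.length_cons, pow_succ]
      ring

lemma sum_eq_ofDigits (x : ℤ) (L : List ℕ) :
    ∑ i ∈ Finset.range L.length, (L.getD i 0 : ℤ) * x ^ i = Nat.ofDigits x L := by
  induction L with
  | nil => simp [Nat.ofDigits]
  | cons d L ih =>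
      rw [List.length_cons, Finset.sum_range_succ']
      have h1 : ∀ i ∈ Finset.range L.length,
          ((d :: L).getD (i + 1) 0 : ℤ) * x ^ (i + 1) = x * ((L.getD i 0 : ℤ) * x ^ i) := by
        intro i _
        simp only [List.getD_cons_succ, pow_succ]
        ring
      rw [Finset.sum_congr rfl h1, ← Finset.mul_sum, ih, ofDigits_cons']
      simp
      ring

lemma abs_ofDigits_le (p : ℕ) (L : List ℕ) (h : ∀ d ∈ L, d < p) :
    |Nat.ofDigits (-(p : ℤ)) L| ≤ (p : ℤ) ^ L.length - 1 := by
  induction L with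
  | nil => simp [Nat.ofDigits]
  | cons d L ih =>
      have hd : (d : ℤ) ≤ (p : ℤ) - 1 := by
        have := h d (List.mem_cons_self)
        omega
      have hd0 : (0 : ℤ) ≤ d := Int.ofNat_nonneg d
      have hL := ih (fun e he => h e (List.mem_cons_of_mem d he))
      have hp0 : (0 : ℤ) ≤ p := Int.ofNat_nonneg p
      have habs : |Nat.ofDigits (-(p : ℤ)) (d :: L)|
          ≤ (d : ℤ) + (p : ℤ) * |Nat.ofDigits (-(p : ℤ)) L| := by
        rw [ofDigits_cons']
        calc |(d : ℤ) + -(p : ℤ) * Nat.ofDigits (-(p : ℤ)) L|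
            ≤ |(d : ℤ)| + |(-(p : ℤ)) * Nat.ofDigits (-(p : ℤ)) L| := abs_add_le _ _
          _ = (d : ℤ) + (p : ℤ) * |Nat.ofDigits (-(p : ℤ)) L| := by
              rw [abs_of_nonneg hd0, abs_mul, abs_neg, abs_of_nonneg hp0]
      have hpow : (0:ℤ) ≤ (p : ℤ) ^ L.length := pow_nonneg hp0 _
      calc |Nat.ofDigits (-(p : ℤ)) (d :: L)|
          ≤ (d : ℤ) + (p : ℤ) * |Nat.ofDigits (-(p : ℤ)) L| := habs
        _ ≤ ((p : ℤ) - 1) + (p : ℤ) * ((p : ℤ) ^ L.length - 1) := by nlinarith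
        _ ≤ (p : ℤ) ^ (d :: L).length - 1 := by
            rw [List.length_cons, pow_succ]; nlinarith



lemma ofDigits_nil' (b : ℤ) : Nat.ofDigits b [] = 0 := rfl

lemma exists_negRep_aux (p : ℕ) (hp : 2 ≤ p) :
    ∀ (N : ℕ) (m : ℤ), 2 * m.natAbs + (if m < 0 then 1 else 0) ≤ N →
      ∃ L : List ℕ, (∀ d ∈ L, d < p) ∧ (∀ h : L ≠ [], L.getLast h ≠ 0) ∧
        Nat.ofDigits (-(p : ℤ)) L = m := by
  intro N
  induction N with
  | zero =>
      intro m hm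
      have hm0 : m = 0 := by omega
      exact ⟨[], by simp, by simp, by simp [ofDigits_nil', hm0]⟩
  | succ N ih =>
      intro m hm
      by_cases hm0 : m = 0
      · exact ⟨[], by simp, by simp, by simp [ofDigits_nil', hm0]⟩
      · have hpz : (0 : ℤ) < p := by exact_mod_cast Nat.lt_of_lt_of_le Nat.zero_lt_two hp
        set q : ℤ := m / p with hq
        set r : ℤ := m % p with hr
        have hr0 : 0 ≤ r := Int.emod_nonneg m (by positivity)
        have hrp : r < p := Int.emod_lt_of_pos m hpz
        have heq : m = p * q + r := (Int.mul_ediv_add_emod m p).symm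
        set d : ℕ := r.toNat with hdd
        have hdr : (d : ℤ) = r := Int.toNat_of_nonneg hr0
        have hdp : d < p := by omega
        by_cases hq0 : q = 0
        · -- m = r, single digit
          have hmr : m = r := by rw [heq, hq0]; ring
          refine ⟨[d], by simp [hdp], ?_, ?_⟩
          · intro h
            simp only [List.getLast_singleton]
            omega
          · rw [ofDigits_cons', ofDigits_nil']
            ring_nf
            omega
        · -- recurse on m' = -q
          have hmeas : 2 * (-q).natAbs + (if -q < 0 then 1 else 0) ≤ N := by
            rcases lt_trichotomy m 0 with hneg | hzero | hpos
            · have hq1 : q ≤ -1 := by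
                by_contra hcon
                push_neg at hcon
                have hq0' : 0 ≤ q := by omega
                have := mul_nonneg hpz.le hq0'
                linarith
              have hmq : m ≤ q := by
                have h2 : ((p : ℤ) - 1) * q ≤ ((p : ℤ) - 1) * (-1) :=
                  mul_le_mul_of_nonneg_left hq1 (by linarith)
                nlinarith
              rw [if_pos hneg] at hm
              rw [if_neg (by omega : ¬(-q < 0))]
              omega
            · exact absurd hzero hm0
            · have hq0' : 0 ≤ q := Int.ediv_nonneg hpos.le hpz.le
              have hq1 : 1 ≤ q := by omega
              have hqm : q + 1 ≤ m := by
                have h2 : (2 : ℤ) * q ≤ (p : ℤ) * q :=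
                  mul_le_mul_of_nonneg_right (by exact_mod_cast hp) hq0'
                linarith
              rw [if_neg (by omega : ¬ m < 0)] at hm
              rw [if_pos (by omega : -q < 0)]
              omega
          obtain ⟨L', hL'd, hL'l, hL'v⟩ := ih (-q) hmeas
          have hL'ne : L' ≠ [] := by
            intro h
            rw [h, ofDigits_nil'] at hL'v
            omega
          refine ⟨d :: L', ?_, ?_, ?_⟩
          · intro e he
            rcases List.mem_cons.1 he with h | h
            · subst h; exact hdp
            · exact hL'd e h
          · intro h
            rw [List.getLast_cons hL'ne]
            exact hL'l hL'ne
          · rw [ofDigits_cons', hL'v, hdr]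
            linear_combination -heq

lemma exists_negRep (p : ℕ) (hp : 2 ≤ p) (m : ℤ) :
    ∃ L : List ℕ, (∀ d ∈ L, d < p) ∧ (∀ h : L ≠ [], L.getLast h ≠ 0) ∧
      Nat.ofDigits (-(p : ℤ)) L = m :=
  exists_negRep_aux p hp (2 * m.natAbs + 1) m (by split <;> omega)

lemma exists_mod_rep (p : ℕ) (hp : 2 ≤ p) :
    ∀ (k : ℕ) (x : ℤ), ∃ L : List ℕ, L.length = k ∧ (∀ d ∈ L, d < p) ∧
      (p : ℤ) ^ k ∣ Nat.ofDigits (-(p : ℤ)) L - x := by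
  intro k
  induction k with
  | zero => exact fun x => ⟨[], rfl, by simp, by simp⟩
  | succ k ih =>
      intro x
      have hpz : (0 : ℤ) < p := by exact_mod_cast Nat.lt_of_lt_of_le Nat.zero_lt_two hp
      obtain ⟨L', hlen, hdig, hdvd⟩ := ih (-(x / p))
      set d : ℕ := (x % p).toNat with hdd
      have hdr : (d : ℤ) = x % p := Int.toNat_of_nonneg (Int.emod_nonneg x (by positivity))
      have hdp : d < p := by
        have := Int.emod_lt_of_pos x hpz
        omega
      refine ⟨d :: L', by simp [hlen], ?_, ?_⟩
      · intro e he
        rcases List.mem_cons.1 he with h | h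
        · subst h; exact hdp
        · exact hdig e h
      · obtain ⟨c, hc⟩ := hdvd
        have hx : x = p * (x / p) + x % p := (Int.mul_ediv_add_emod x p).symm
        refine ⟨-c, ?_⟩
        rw [ofDigits_cons']
        linear_combination (-(p : ℤ)) * hc - hx + hdr

lemma exists_nat_rep (p : ℕ) (hp : 2 ≤ p) :
    ∀ (k : ℕ) (r : ℕ), r < p ^ k → ∃ L : List ℕ, L.length = k ∧ (∀ d ∈ L, d < p) ∧
      Nat.ofDigits p L = r := by
  intro k
  induction k with
  | zero =>
      intro r hr
      simp only [pow_zero, Nat.lt_one_iff] at hr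
      exact ⟨[], rfl, by simp, by simp [hr, Nat.ofDigits_nil]⟩
  | succ k ih =>
      intro r hr
      have hp0 : 0 < p := by omega
      rw [pow_succ, mul_comm] at hr
      obtain ⟨L', hlen, hdig, hval⟩ := ih (r / p) (Nat.div_lt_of_lt_mul hr)
      refine ⟨r % p :: L', by simp [hlen], ?_, ?_⟩
      · intro e he
        rcases List.mem_cons.1 he with h | h
        · subst h; exact Nat.mod_lt r hp0
        · exact hdig e h
      · rw [Nat.ofDigits_cons, hval]
        exact Nat.mod_add_div r p


end NegPAux
section Chunk
open NegPAux
variable {A : Type*}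

lemma pker_finite_of_automatic [Fintype A] (p : ℕ) (hp : 2 ≤ p) (v : ℕ → A)
    (h : IsPAutomatic p v) : (PKer p v).Finite := by
  classical
  obtain ⟨S, hS, δ, s0, ω, hM⟩ := h
  haveI := hS
  set F : S × A → (ℕ → A) := fun q n =>
    if n = 0 then q.2 else ω ((Nat.digits p n).foldl δ q.1) with hF
  refine (Set.finite_range F).subset ?_
  rintro g ⟨L, hL, rfl⟩
  refine ⟨(L.foldl δ s0, v (Nat.ofDigits p L)), ?_⟩
  funext n
  by_cases hn : n = 0
  · subst hn; simp [hF]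
  · have hd : Nat.digits p n ≠ [] := Nat.digits_ne_nil_iff_ne_zero.2 hn
    simp only [hF, if_neg hn]
    rw [← List.foldl_append]
    exact hM (Nat.ofDigits p L + p ^ L.length * n) (L ++ Nat.digits p n)
      (fun e he => by
        rcases List.mem_append.1 he with h1 | h1
        · exact hL e h1
        · exact Nat.digits_lt_base (by omega) h1)
      (fun hne => by
        rw [List.getLast_append, dif_neg (by simpa using hd)]
        exact Nat.getLast_digit_ne_zero p hn)
      (by
        rw [sum_eq_ofDigits, ofDigits_append', ← Nat.coe_ofDigits ℤ,
          ← Nat.coe_ofDigits ℤ, Nat.ofDigits_digits p n]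
        push_cast
        ring)

lemma automatic_of_pker_finite (p : ℕ) (v : ℕ → A) (h : (PKer p v).Finite) :
    IsPAutomatic p v := by
  classical
  haveI : Fintype (PKer p v) := h.fintype
  set δ : PKer p v → ℕ → PKer p v := fun g d =>
    if hd : d < p then ⟨fun n => (g : ℕ → A) (d + p * n), by
      obtain ⟨L, hL, hg⟩ := g.2
      refine ⟨L ++ [d], ?_, ?_⟩
      · intro e he
        rcases List.mem_append.1 he with h1 | h1
        · exact hL e h1
        · simp only [List.mem_singleton] at h1; omega
      · funext n
        rw [hg]
        simp only
        congr 1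
        rw [Nat.ofDigits_append, Nat.ofDigits_singleton, List.length_append]
        simp only [List.length_singleton, pow_succ, pow_zero]
        ring⟩
    else g with hδ
  have hs0mem : v ∈ PKer p v := ⟨[], by simp, by funext n; simp [Nat.ofDigits_nil]⟩
  set s0 : PKer p v := ⟨v, hs0mem⟩ with hs0
  have key : ∀ (L : List ℕ), (∀ d ∈ L, d < p) → ∀ (L₀ : List ℕ) (g : PKer p v),
      (g : ℕ → A) = (fun n => v (Nat.ofDigits p L₀ + p ^ L₀.length * n)) →
      ((L.foldl δ g : PKer p v) : ℕ → A)
        = fun n => v (Nat.ofDigits p (L₀ ++ L) + p ^ (L₀ ++ L).length * n) := by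
    intro L
    induction L with
    | nil => intro _ L₀ g hg; simpa using hg
    | cons d L ih =>
        intro hL L₀ g hg
        have hd : d < p := hL d (List.mem_cons_self)
        have hstep : ((δ g d : PKer p v) : ℕ → A)
            = fun n => v (Nat.ofDigits p (L₀ ++ [d]) + p ^ (L₀ ++ [d]).length * n) := by
          simp only [hδ, dif_pos hd]
          funext n
          rw [hg]
          simp only
          congr 1
          rw [Nat.ofDigits_append, Nat.ofDigits_singleton, List.length_append]
          simp only [List.length_singleton, pow_succ, pow_zero]
          ring
        have hih := ih (fun e he => hL e (List.mem_cons_of_mem d he)) (L₀ ++ [d]) (δ g d) hstep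
        rw [List.foldl_cons, hih]
        simp [List.append_assoc]
  refine isPAutomatic_intro p v δ s0 (fun g => (g : ℕ → A) 0) ?_
  intro n L h1 h2 h3
  have hs0' : (s0 : ℕ → A)
      = fun n => v (Nat.ofDigits p ([] : List ℕ) + p ^ ([] : List ℕ).length * n) := by
    funext n; simp [hs0, Nat.ofDigits_nil]
  have hk := key L h1 [] s0 hs0'
  simp only [hk, List.nil_append]
  have hn : n = Nat.ofDigits p L := by
    rw [sum_eq_ofDigits, ← Nat.coe_ofDigits ℤ] at h3
    exact_mod_cast h3
  rw [hn]
  simp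

end Chunk
section Chunk2
open NegPAux
variable {A : Type*}

lemma nker_finite_of_automatic [Fintype A] (p : ℕ) (hp : 2 ≤ p) (u : ℤ → A)
    (h : IsNegPAutomatic p u) : (NKer p u).Finite := by
  classical
  obtain ⟨S, hS, δ, s0, ω, hM⟩ := h
  haveI := hS
  choose rep hrepd hrepl hrepv using exists_negRep p hp
  set F : S × A → (ℤ → A) := fun q m =>
    if m = 0 then q.2 else ω ((rep m).foldl δ q.1) with hF
  refine (Set.finite_range F).subset ?_
  rintro g ⟨L, hL, rfl⟩
  refine ⟨(L.foldl δ s0, u (Nat.ofDigits (-(p : ℤ)) L)), ?_⟩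
  funext m
  by_cases hm : m = 0
  · subst hm; simp [hF]
  · have hd : rep m ≠ [] := by
      intro hnil
      have := hrepv m
      rw [hnil, ofDigits_nil'] at this
      exact hm this.symm
    simp only [hF, if_neg hm]
    rw [← List.foldl_append]
    exact hM (Nat.ofDigits (-(p : ℤ)) L + (-(p : ℤ)) ^ L.length * m) (L ++ rep m)
      (fun e he => by
        rcases List.mem_append.1 he with h1 | h1
        · exact hL e h1
        · exact hrepd m e h1)
      (fun hne => by
        rw [List.getLast_append, dif_neg (by simpa using hd)]
        exact hrepl m hd)
      (by
        rw [sum_eq_ofDigits, ofDigits_append', hrepv m])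

lemma automatic_of_nker_finite (p : ℕ) (u : ℤ → A) (h : (NKer p u).Finite) :
    IsNegPAutomatic p u := by
  classical
  haveI : Fintype (NKer p u) := h.fintype
  set δ : NKer p u → ℕ → NKer p u := fun g d =>
    if hd : d < p then ⟨fun m => (g : ℤ → A) ((d : ℤ) + (-(p : ℤ)) * m), by
      obtain ⟨L, hL, hg⟩ := g.2
      refine ⟨L ++ [d], ?_, ?_⟩
      · intro e he
        rcases List.mem_append.1 he with h1 | h1
        · exact hL e h1
        · simp only [List.mem_singleton] at h1; omega
      · funext m
        rw [hg]
        simp only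
        congr 1
        rw [ofDigits_append', show Nat.ofDigits (-(p : ℤ)) [d] = (d : ℤ) by
          rw [ofDigits_cons', ofDigits_nil']; ring, List.length_append]
        simp only [List.length_singleton, pow_succ]
        ring⟩
    else g with hδ
  have hs0mem : u ∈ NKer p u := ⟨[], by simp, by funext m; simp [ofDigits_nil']⟩
  set s0 : NKer p u := ⟨u, hs0mem⟩ with hs0
  have key : ∀ (L : List ℕ), (∀ d ∈ L, d < p) → ∀ (L₀ : List ℕ) (g : NKer p u),
      (g : ℤ → A) = (fun m => u (Nat.ofDigits (-(p : ℤ)) L₀ + (-(p : ℤ)) ^ L₀.length * m)) →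
      ((L.foldl δ g : NKer p u) : ℤ → A)
        = fun m => u (Nat.ofDigits (-(p : ℤ)) (L₀ ++ L) + (-(p : ℤ)) ^ (L₀ ++ L).length * m) := by
    intro L
    induction L with
    | nil => intro _ L₀ g hg; simpa using hg
    | cons d L ih =>
        intro hL L₀ g hg
        have hd : d < p := hL d (List.mem_cons_self)
        have hstep : ((δ g d : NKer p u) : ℤ → A)
            = fun m => u (Nat.ofDigits (-(p : ℤ)) (L₀ ++ [d])
                + (-(p : ℤ)) ^ (L₀ ++ [d]).length * m) := by
          simp only [hδ, dif_pos hd]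
          funext m
          rw [hg]
          simp only
          congr 1
          rw [ofDigits_append', show Nat.ofDigits (-(p : ℤ)) [d] = (d : ℤ) by
            rw [ofDigits_cons', ofDigits_nil']; ring, List.length_append]
          simp only [List.length_singleton, pow_succ]
          ring
        have hih := ih (fun e he => hL e (List.mem_cons_of_mem d he)) (L₀ ++ [d]) (δ g d) hstep
        rw [List.foldl_cons, hih]
        simp [List.append_assoc]
  refine isNegPAutomatic_intro p u δ s0 (fun g => (g : ℤ → A) 0) ?_
  intro m L h1 h2 h3
  have hs0' : (s0 : ℤ → A)
      = fun m => u (Nat.ofDigits (-(p : ℤ)) ([] : List ℕ)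
          + (-(p : ℤ)) ^ ([] : List ℕ).length * m) := by
    funext m; simp [hs0, ofDigits_nil']
  have hk := key L h1 [] s0 hs0'
  simp only [hk, List.nil_append]
  rw [sum_eq_ofDigits] at h3
  rw [h3]
  simp

end Chunk2
section Chunk3
open NegPAux
variable {A : Type*}

/-- Reduce an integer in `(-P, P)` to a nonnegative residue by adding `0` or `P`. -/
lemma reduce_aux (P x : ℤ) (hx1 : -P < x) (hx2 : x < P) :
    ∃ (t : ℤ) (r₀ : ℕ), (t = 0 ∨ t = 1) ∧ (r₀ : ℤ) = x + P * t ∧ (r₀ : ℤ) < P := by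
  by_cases h : 0 ≤ x
  · refine ⟨0, x.toNat, Or.inl rfl, ?_, ?_⟩
    · rw [Int.toNat_of_nonneg h]; ring
    · rw [Int.toNat_of_nonneg h]; exact hx2
  · refine ⟨1, (x + P).toNat, Or.inr rfl, ?_, ?_⟩
    · rw [Int.toNat_of_nonneg (by omega)]; ring
    · rw [Int.toNat_of_nonneg (by omega)]; omega

lemma finite_pker_pos [Fintype A] (p : ℕ) (hp : 2 ≤ p) (u : ℤ → A)
    (hN : (NKer p u).Finite) : (PKer p (fun m : ℕ => u m)).Finite := by
  classical
  set G : (ℤ → A) × Bool × ℤ → (ℕ → A) := fun q n =>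
    q.1 ((if q.2.1 then (n : ℤ) else -(n : ℤ)) + q.2.2) with hG
  have hfin : ((NKer p u) ×ˢ ((Set.univ : Set Bool) ×ˢ ({-1, 0, 1} : Set ℤ))).Finite :=
    hN.prod (Set.finite_univ.prod ((Set.finite_singleton 1).insert 0 |>.insert (-1)))
  refine (hfin.image G).subset ?_
  rintro g ⟨L, hL, rfl⟩
  set k := L.length with hk
  set r : ℤ := ((Nat.ofDigits p L : ℕ) : ℤ) with hr
  have hr0 : 0 ≤ r := Int.ofNat_nonneg _
  have hrP : r < (p : ℤ) ^ k := by
    have := Nat.ofDigits_lt_base_pow_length (by omega : 1 < p) hL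
    rw [hr, hk]
    exact_mod_cast this
  obtain ⟨L', hlen, hL', hdvd⟩ := exists_mod_rep p hp k r
  set r' : ℤ := Nat.ofDigits (-(p : ℤ)) L' with hr'
  obtain ⟨t₀, ht₀⟩ := hdvd
  have habs : |r'| ≤ (p : ℤ) ^ k - 1 := by
    have := abs_ofDigits_le p L' hL'
    rwa [hlen] at this
  have hPpos : (0 : ℤ) < (p : ℤ) ^ k := by positivity
  have ht₀b : -1 ≤ t₀ ∧ t₀ ≤ 1 := by
    constructor
    · by_contra hc
      push_neg at hc
      have : (p : ℤ) ^ k * t₀ ≤ (p : ℤ) ^ k * (-2) :=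
        mul_le_mul_of_nonneg_left (by omega) hPpos.le
      have h2 := abs_le.1 habs
      nlinarith
    · by_contra hc
      push_neg at hc
      have : (p : ℤ) ^ k * 2 ≤ (p : ℤ) ^ k * t₀ :=
        mul_le_mul_of_nonneg_left (by omega) hPpos.le
      have h2 := abs_le.1 habs
      nlinarith
  have hmem : (fun m : ℤ => u (Nat.ofDigits (-(p : ℤ)) L' + (-(p : ℤ)) ^ L'.length * m))
      ∈ NKer p u := ⟨L', hL', rfl⟩
  by_cases hkp : Even k
  · have hpow : (-(p : ℤ)) ^ k = (p : ℤ) ^ k := hkp.neg_pow _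
    refine ⟨(_, true, -t₀), ⟨hmem, Set.mem_univ _, by
      simp only [Set.mem_insert_iff, Set.mem_singleton_iff]; omega⟩, ?_⟩
    funext n
    simp only [hG, if_pos]
    congr 1
    rw [hlen, hpow]
    push_cast
    rw [← Nat.coe_ofDigits ℤ, ← hr]
    linear_combination ht₀
  · have hpow : (-(p : ℤ)) ^ k = -((p : ℤ) ^ k) := (Nat.not_even_iff_odd.1 hkp).neg_pow _
    refine ⟨(_, false, t₀), ⟨hmem, Set.mem_univ _, by
      simp only [Set.mem_insert_iff, Set.mem_singleton_iff]; omega⟩, ?_⟩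
    funext n
    simp only [hG, if_neg (Bool.false_ne_true)]
    congr 1
    rw [hlen, hpow]
    push_cast
    rw [← Nat.coe_ofDigits ℤ, ← hr]
    linear_combination ht₀

lemma finite_pker_neg [Fintype A] (p : ℕ) (hp : 2 ≤ p) (u : ℤ → A)
    (hN : (NKer p u).Finite) : (PKer p (fun m : ℕ => u (-(m : ℤ)))).Finite := by
  classical
  set G : (ℤ → A) × Bool × ℤ → (ℕ → A) := fun q n =>
    q.1 ((if q.2.1 then (n : ℤ) else -(n : ℤ)) + q.2.2) with hG
  have hfin : ((NKer p u) ×ˢ ((Set.univ : Set Bool) ×ˢ ({-1, 0, 1} : Set ℤ))).Finite :=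
    hN.prod (Set.finite_univ.prod ((Set.finite_singleton 1).insert 0 |>.insert (-1)))
  refine (hfin.image G).subset ?_
  rintro g ⟨L, hL, rfl⟩
  set k := L.length with hk
  set r : ℤ := ((Nat.ofDigits p L : ℕ) : ℤ) with hr
  have hr0 : 0 ≤ r := Int.ofNat_nonneg _
  have hrP : r < (p : ℤ) ^ k := by
    have := Nat.ofDigits_lt_base_pow_length (by omega : 1 < p) hL
    rw [hr, hk]
    exact_mod_cast this
  obtain ⟨L', hlen, hL', hdvd⟩ := exists_mod_rep p hp k (-r)
  set r' : ℤ := Nat.ofDigits (-(p : ℤ)) L' with hr'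
  obtain ⟨t₀, ht₀⟩ := hdvd
  have habs : |r'| ≤ (p : ℤ) ^ k - 1 := by
    have := abs_ofDigits_le p L' hL'
    rwa [hlen] at this
  have hPpos : (0 : ℤ) < (p : ℤ) ^ k := by positivity
  have ht₀b : -1 ≤ t₀ ∧ t₀ ≤ 1 := by
    constructor
    · by_contra hc
      push_neg at hc
      have : (p : ℤ) ^ k * t₀ ≤ (p : ℤ) ^ k * (-2) :=
        mul_le_mul_of_nonneg_left (by omega) hPpos.le
      have h2 := abs_le.1 habs
      nlinarith
    · by_contra hc
      push_neg at hc
      have : (p : ℤ) ^ k * 2 ≤ (p : ℤ) ^ k * t₀ :=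
        mul_le_mul_of_nonneg_left (by omega) hPpos.le
      have h2 := abs_le.1 habs
      nlinarith
  have hmem : (fun m : ℤ => u (Nat.ofDigits (-(p : ℤ)) L' + (-(p : ℤ)) ^ L'.length * m))
      ∈ NKer p u := ⟨L', hL', rfl⟩
  by_cases hkp : Even k
  · have hpow : (-(p : ℤ)) ^ k = (p : ℤ) ^ k := hkp.neg_pow _
    refine ⟨(_, false, -t₀), ⟨hmem, Set.mem_univ _, by
      simp only [Set.mem_insert_iff, Set.mem_singleton_iff]; omega⟩, ?_⟩
    funext n
    simp only [hG, if_neg (Bool.false_ne_true)]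
    congr 1
    rw [hlen, hpow]
    push_cast
    rw [← Nat.coe_ofDigits ℤ, ← hr]
    linear_combination ht₀
  · have hpow : (-(p : ℤ)) ^ k = -((p : ℤ) ^ k) := (Nat.not_even_iff_odd.1 hkp).neg_pow _
    refine ⟨(_, true, t₀), ⟨hmem, Set.mem_univ _, by
      simp only [Set.mem_insert_iff, Set.mem_singleton_iff]; omega⟩, ?_⟩
    funext n
    simp only [hG, if_pos]
    congr 1
    rw [hlen, hpow]
    push_cast
    rw [← Nat.coe_ofDigits ℤ, ← hr]
    linear_combination ht₀

end Chunk3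
section Chunk4
open NegPAux
variable {A : Type*}

lemma finite_nker [Fintype A] (p : ℕ) (hp : 2 ≤ p) (u : ℤ → A)
    (h1 : (PKer p (fun m : ℕ => u m)).Finite)
    (h2 : (PKer p (fun m : ℕ => u (-(m : ℤ)))).Finite) : (NKer p u).Finite := by
  classical
  set v : ℕ → A := fun m : ℕ => u m with hv
  set w : ℕ → A := fun m : ℕ => u (-(m : ℤ)) with hw
  set H : (ℕ → A) × (ℕ → A) × ℤ × ℤ × A → (ℤ → A) := fun q m =>
    if 0 < m then q.1 ((m - q.2.2.1).toNat)
    else if m < 0 then q.2.1 ((-m - q.2.2.2.1).toNat)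
    else q.2.2.2.2 with hH
  have hfin : ((PKer p v ∪ PKer p w) ×ˢ ((PKer p v ∪ PKer p w) ×ˢ
      (({0, 1} : Set ℤ) ×ˢ (({0, 1} : Set ℤ) ×ˢ (Set.univ : Set A))))).Finite :=
    (h1.union h2).prod ((h1.union h2).prod (((Set.finite_singleton 1).insert 0).prod
      (((Set.finite_singleton 1).insert 0).prod Set.finite_univ)))
  refine (hfin.image H).subset ?_
  rintro h ⟨L, hL, rfl⟩
  set k := L.length with hk
  set r : ℤ := Nat.ofDigits (-(p : ℤ)) L with hr
  have hPpos : (0 : ℤ) < (p : ℤ) ^ k := by positivity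
  have habs := abs_ofDigits_le p L hL
  rw [← hr, ← hk] at habs
  have hb := abs_le.1 habs
  obtain ⟨t₁, r₁, ht₁, hr₁, hr₁P⟩ :=
    reduce_aux ((p : ℤ) ^ k) r (by linarith [hb.1]) (by linarith [hb.2])
  obtain ⟨t₂, r₂, ht₂, hr₂, hr₂P⟩ :=
    reduce_aux ((p : ℤ) ^ k) (-r) (by linarith [hb.2]) (by linarith [hb.1])
  have hr₁N : r₁ < p ^ k := by exact_mod_cast (by push_cast; exact hr₁P : ((r₁ : ℕ) : ℤ) < ((p ^ k : ℕ) : ℤ))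
  have hr₂N : r₂ < p ^ k := by exact_mod_cast (by push_cast; exact hr₂P : ((r₂ : ℕ) : ℤ) < ((p ^ k : ℕ) : ℤ))
  obtain ⟨L₁, hL₁len, hL₁d, hL₁v⟩ := exists_nat_rep p hp k r₁ hr₁N
  obtain ⟨L₂, hL₂len, hL₂d, hL₂v⟩ := exists_nat_rep p hp k r₂ hr₂N
  set g₁ : ℕ → A := fun n => v (Nat.ofDigits p L₁ + p ^ L₁.length * n) with hg₁
  set g₂ : ℕ → A := fun n => w (Nat.ofDigits p L₂ + p ^ L₂.length * n) with hg₂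
  have hg₁m : g₁ ∈ PKer p v ∪ PKer p w := Or.inl ⟨L₁, hL₁d, rfl⟩
  have hg₂m : g₂ ∈ PKer p v ∪ PKer p w := Or.inr ⟨L₂, hL₂d, rfl⟩
  have hg₁e : ∀ x : ℤ, 0 ≤ x → g₁ x.toNat = u ((r₁ : ℤ) + (p : ℤ) ^ k * x) := by
    intro x hx
    rw [hg₁, hv]
    simp only
    congr 1
    push_cast [hL₁v, hL₁len, Int.toNat_of_nonneg hx]
    ring
  have hg₂e : ∀ x : ℤ, 0 ≤ x → g₂ x.toNat = u (-((r₂ : ℤ) + (p : ℤ) ^ k * x)) := by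
    intro x hx
    rw [hg₂, hw]
    simp only
    congr 1
    push_cast [hL₂v, hL₂len, Int.toNat_of_nonneg hx]
    ring
  have ht₁' : 0 ≤ t₁ ∧ t₁ ≤ 1 := by rcases ht₁ with h | h <;> omega
  have ht₂' : 0 ≤ t₂ ∧ t₂ ≤ 1 := by rcases ht₂ with h | h <;> omega
  have ht₁m : t₁ ∈ ({0, 1} : Set ℤ) := by rcases ht₁ with h | h <;> simp [h]
  have ht₂m : t₂ ∈ ({0, 1} : Set ℤ) := by rcases ht₂ with h | h <;> simp [h]
  by_cases hkp : Even k
  · have hpow : (-(p : ℤ)) ^ k = (p : ℤ) ^ k := hkp.neg_pow _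
    refine ⟨(g₁, g₂, t₁, t₂, u r), ⟨hg₁m, hg₂m, ht₁m, ht₂m, Set.mem_univ _⟩, ?_⟩
    funext m
    simp only [hH]
    rcases lt_trichotomy m 0 with hm | hm | hm
    · rw [if_neg (by omega), if_pos hm, hg₂e (-m - t₂) (by omega)]
      rw [hpow]
      congr 1
      linear_combination -hr₂
    · rw [if_neg (by omega), if_neg (by omega), hm]
      norm_num
    · rw [if_pos hm, hg₁e (m - t₁) (by omega)]
      rw [hpow]
      congr 1
      linear_combination hr₁
  · have hpow : (-(p : ℤ)) ^ k = -((p : ℤ) ^ k) := (Nat.not_even_iff_odd.1 hkp).neg_pow _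
    refine ⟨(g₂, g₁, t₂, t₁, u r), ⟨hg₂m, hg₁m, ht₂m, ht₁m, Set.mem_univ _⟩, ?_⟩
    funext m
    simp only [hH]
    rcases lt_trichotomy m 0 with hm | hm | hm
    · rw [if_neg (by omega), if_pos hm, hg₁e (-m - t₁) (by omega)]
      rw [hpow]
      congr 1
      linear_combination hr₁
    · rw [if_neg (by omega), if_neg (by omega), hm]
      norm_num
    · rw [if_pos hm, hg₂e (m - t₂) (by omega)]
      rw [hpow]
      congr 1
      linear_combination -hr₂

end Chunk4


/-- A bi-infinite sequence over a finite alphabet is `(-p)`-automatic if and only if both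
one-sided sequences `(u_m)_{m ≥ 0}` and `(u_{-m})_{m ≥ 0}` are `p`-automatic. -/
theorem negPAutomatic_iff_two_sided {A : Type*} [Fintype A] (p : ℕ) (hp : 2 ≤ p)
    (u : ℤ → A) :
    IsNegPAutomatic p u ↔
      IsPAutomatic p (fun m : ℕ => u m) ∧ IsPAutomatic p (fun m : ℕ => u (-(m : ℤ))) := by
  constructor
  · intro h
    have hN := nker_finite_of_automatic p hp u h
    exact ⟨automatic_of_pker_finite p _ (finite_pker_pos p hp u hN),
      automatic_of_pker_finite p _ (finite_pker_neg p hp u hN)⟩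
  · rintro ⟨h1, h2⟩
    exact automatic_of_nker_finite p u
      (finite_nker p hp u (pker_finite_of_automatic p hp _ h1)
        (pker_finite_of_automatic p hp _ h2))
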